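/- For θ, φ, ξ ∈ (0, π), the ratio A(θ,φ,ξ)/B(θ,φ,ξ) lies strictly between 0 and 1, where A and B are the Fourier symbols of the 3D isotropic Laplacian and HSSOR preconditioner respectively. -/
import Mathlib


open Real

theorem ratio_bounds (θ φ ξ : ℝ) (hθ : θ ∈ Set.Ioo 0 π) (hφ : φ ∈ Set.Ioo 0 π)
    (hξ : ξ ∈ Set.Ioo 0 π) :
    let T := 6 - 2 * Real.cos θ
    let P := T + 1 / T - 2 * Real.cos φ
    let B := P + 1 / P - 2 * Real.cos ξ
    let A := 6 - 2 * Real.cos θ - 2 * Real.cos φ - 2 * Real.cos ξ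
    0 < A / B ∧ A / B < 1 := by
  intro T P B A
  have hc1 : Real.cos θ < 1 := by
    calc Real.cos θ < Real.cos 0 :=
      Real.cos_lt_cos_of_nonneg_of_le_pi le_rfl (le_of_lt hθ.2) hθ.1
    _ = 1 := Real.cos_zero
  have hc2 : Real.cos φ < 1 := by
    calc Real.cos φ < Real.cos 0 :=
      Real.cos_lt_cos_of_nonneg_of_le_pi le_rfl (le_of_lt hφ.2) hφ.1
    _ = 1 := Real.cos_zero
  have hc3 : Real.cos ξ < 1 := by
    calc Real.cos ξ < Real.cos 0 :=
      Real.cos_lt_cos_of_nonneg_of_le_pi le_rfl (le_of_lt hξ.2) hξ.1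
    _ = 1 := Real.cos_zero
  have hT : (4:ℝ) < T := by simp only [T]; linarith
  have hT0 : (0:ℝ) < T := by linarith
  have hTi : (0:ℝ) < 1 / T := by positivity
  have hP : (2:ℝ) < P := by simp only [P]; linarith
  have hP0 : (0:ℝ) < P := by linarith
  have hPi : (0:ℝ) < 1 / P := by positivity
  have hA : (0:ℝ) < A := by simp only [A]; linarith
  have hB : (0:ℝ) < B := by simp only [B]; linarith
  have hAB : A < B := by simp only [A, B, P, T]; linarith
  exact ⟨div_pos hA hB, (div_lt_one hB).mpr hAB⟩
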